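/- In an Archimedean idempotent b-space V, every family of nonzero wo-closed subspaces that is linearly ordered by inclusion has nonzero intersection. -/
import Mathlib


/-- An idempotent commutative semigroup. -/
structure IdemSemigroup (S : Type*) where
  add : S → S → S
  add_comm : ∀ x y, add x y = add y x
  add_assoc : ∀ x y z, add (add x y) z = add x (add y z)
  add_idem : ∀ x, add x x = x

namespace IdemSemigroup
variable {S : Type*}

/-- The canonical order: x ≼ y iff x ⊕ y = y. -/
def le (A : IdemSemigroup S) (x y : S) : Prop := A.add x y = y
def UB (A : IdemSemigroup S) (X : Set S) (b : S) : Prop := ∀ x ∈ X, A.le x b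
def LB (A : IdemSemigroup S) (X : Set S) (b : S) : Prop := ∀ x ∈ X, A.le b x
def IsSup (A : IdemSemigroup S) (X : Set S) (s : S) : Prop :=
  A.UB X s ∧ ∀ b, A.UB X b → A.le s b
def IsInf (A : IdemSemigroup S) (X : Set S) (s : S) : Prop :=
  A.LB X s ∧ ∀ b, A.LB X b → A.le b s
/-- b-completeness: every subset bounded above (including ∅) has a least upper bound. -/
def BComplete (A : IdemSemigroup S) : Prop :=
  ∀ X : Set S, (∃ b, A.UB X b) → ∃ s, A.IsSup X s
/-- Linearly ordered subset. -/
def Chain (A : IdemSemigroup S) (X : Set S) : Prop :=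
  ∀ x ∈ X, ∀ y ∈ X, A.le x y ∨ A.le y x

end IdemSemigroup

/-- An idempotent semifield: idempotent semiring with all nonzero elements invertible. -/
structure IdemSemifield (K : Type*) extends IdemSemigroup K where
  mul : K → K → K
  one : K
  zero : K
  mul_assoc : ∀ x y z, mul (mul x y) z = mul x (mul y z)
  one_mul : ∀ x, mul one x = x
  mul_one : ∀ x, mul x one = x
  zero_add : ∀ x, add zero x = x
  zero_mul : ∀ x, mul zero x = zero
  mul_zero : ∀ x, mul x zero = zero
  left_distrib : ∀ x y z, mul x (add y z) = add (mul x y) (mul x z)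
  right_distrib : ∀ x y z, mul (add x y) z = add (mul x z) (mul y z)
  inv_exists : ∀ x, x ≠ zero → ∃ y, mul x y = one ∧ mul y x = one

namespace IdemSemifield
variable {K : Type*}
def BComplete (F : IdemSemifield K) : Prop := F.toIdemSemigroup.BComplete
def pow (F : IdemSemifield K) (x : K) : ℕ → K
  | 0 => F.one
  | n + 1 => F.mul x (F.pow x n)
/-- Algebraically closed: n-th roots exist. -/
def AlgClosed (F : IdemSemifield K) : Prop :=
  ∀ x : K, ∀ n : ℕ, 0 < n → ∃ y, F.pow y n = x
end IdemSemifield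

/-- An idempotent semimodule over an idempotent semifield. -/
structure IdemSemimodule {K : Type*} (F : IdemSemifield K) (V : Type*) extends
    IdemSemigroup V where
  smul : K → V → V
  zero : V
  zero_add : ∀ x, add zero x = x
  smul_smul : ∀ a b x, smul a (smul b x) = smul (F.mul a b) x
  add_smul : ∀ a b x, smul (F.add a b) x = add (smul a x) (smul b x)
  smul_add : ∀ a x y, smul a (add x y) = add (smul a x) (smul a y)
  zero_smul : ∀ x, smul F.zero x = zero
  one_smul : ∀ x, smul F.one x = x

/-- An idempotent b-space: b-complete semimodule, scalar multiplication compatible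
with bounded sups and infs of scalars. -/
structure IdemBSpace {K : Type*} (F : IdemSemifield K) (V : Type*) extends
    IdemSemimodule F V where
  bcomplete : toIdemSemigroup.BComplete
  smul_sup : ∀ (Q : Set K) (x : V) (s : K), Q.Nonempty →
    F.toIdemSemigroup.IsSup Q s →
    toIdemSemigroup.IsSup ((fun a => smul a x) '' Q) (smul s x)
  smul_inf : ∀ (Q : Set K) (x : V) (s : K), Q.Nonempty →
    (∃ b, F.toIdemSemigroup.UB Q b) →
    F.toIdemSemigroup.IsInf Q s →
    toIdemSemigroup.IsInf ((fun a => smul a x) '' Q) (smul s x)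

namespace IdemBSpace
variable {K V : Type*} {F : IdemSemifield K}

def le (B : IdemBSpace F V) (x y : V) : Prop := B.toIdemSemigroup.le x y
def IsSup (B : IdemBSpace F V) (X : Set V) (s : V) : Prop := B.toIdemSemigroup.IsSup X s
def IsInf (B : IdemBSpace F V) (X : Set V) (s : V) : Prop := B.toIdemSemigroup.IsInf X s
def Chain (B : IdemBSpace F V) (X : Set V) : Prop := B.toIdemSemigroup.Chain X

def Subspace (B : IdemBSpace F V) (W : Set V) : Prop :=
  (∀ x ∈ W, ∀ y ∈ W, B.add x y ∈ W) ∧ (∀ (a : K), ∀ x ∈ W, B.smul a x ∈ W)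

/-- wo-closed: sups of bounded linearly ordered subsets and infs of nonempty linearly
ordered subsets (taken in V) belong to the set. -/
def WOClosed (B : IdemBSpace F V) (M : Set V) : Prop :=
  ∀ X ⊆ M, B.Chain X →
    (∀ s, B.IsSup X s → s ∈ M) ∧ (∀ s, X.Nonempty → B.IsInf X s → s ∈ M)

/-- Archimedean element. -/
def ArchElem (B : IdemBSpace F V) (x : V) : Prop :=
  ∀ y, ∃ a : K, B.le y (B.smul a x)

/-- f is the functional x*: x*(y) = inf { k | k ⊙ x ≽ y }. -/
def IsStar (B : IdemBSpace F V) (x : V) (f : V → K) : Prop :=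
  ∀ y, F.toIdemSemigroup.IsInf {k | B.le y (B.smul k x)} (f y)

/-- wo-continuity of the functional f: it preserves sups and infs of bounded
linearly ordered subsets. -/
def WOContStar (B : IdemBSpace F V) (f : V → K) : Prop :=
  (∀ X : Set V, B.Chain X → ∀ s, B.IsSup X s → F.toIdemSemigroup.IsSup (f '' X) (f s)) ∧
  (∀ X : Set V, B.Chain X → X.Nonempty → ∀ s, B.IsInf X s →
    F.toIdemSemigroup.IsInf (f '' X) (f s))

/-- wo-continuous element: its star functional is wo-continuous. -/
def WOContElem (B : IdemBSpace F V) (x : V) : Prop :=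
  ∃ f, B.IsStar x f ∧ B.WOContStar f

/-- Archimedean space: contains a wo-continuous Archimedean element. -/
def ArchSpace (B : IdemBSpace F V) : Prop :=
  ∃ x, B.ArchElem x ∧ B.WOContElem x

/-- The subspace W, with the induced structure, is an Archimedean space. -/
def ArchOn (B : IdemBSpace F V) (W : Set V) : Prop :=
  ∃ x ∈ W, (∀ y ∈ W, ∃ a : K, B.le y (B.smul a x)) ∧
    ∃ f : V → K,
      (∀ y ∈ W, F.toIdemSemigroup.IsInf {k | B.le y (B.smul k x)} (f y)) ∧
      (∀ X ⊆ W, B.Chain X → ∀ s ∈ W, B.IsSup X s →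
        F.toIdemSemigroup.IsSup (f '' X) (f s)) ∧
      (∀ X ⊆ W, B.Chain X → X.Nonempty → ∀ s ∈ W, B.IsInf X s →
        F.toIdemSemigroup.IsInf (f '' X) (f s))

/-- b-linear map of the space into itself. -/
def BLinearMap (B : IdemBSpace F V) (g : V → V) : Prop :=
  (∀ x y, g (B.add x y) = B.add (g x) (g y)) ∧
  (∀ (a : K) x, g (B.smul a x) = B.smul a (g x)) ∧
  (∀ (X : Set V) s, B.IsSup X s → B.IsSup (g '' X) (g s))

/-- b-linear functional. -/
def BLinearFun (B : IdemBSpace F V) (f : V → K) : Prop :=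
  (∀ x y, f (B.add x y) = F.add (f x) (f y)) ∧
  (∀ (a : K) x, f (B.smul a x) = F.mul a (f x)) ∧
  (∀ (X : Set V) s, B.IsSup X s → F.toIdemSemigroup.IsSup (f '' X) (f s))

/-- ∧-subspace: closed under scalar multiplication and infima of nonempty subsets. -/
def WedgeSub (B : IdemBSpace F V) (W : Set V) : Prop :=
  (∀ (a : K), ∀ x ∈ W, B.smul a x ∈ W) ∧
  (∀ X ⊆ W, X.Nonempty → ∃ s ∈ W, (∀ x ∈ X, B.le s x) ∧
    ∀ b ∈ W, (∀ x ∈ X, B.le b x) → B.le b s)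

end IdemBSpace

section AuxLemmas

namespace IdemSemigroup
variable {S : Type*} (A : IdemSemigroup S)

theorem le_refl' (x : S) : A.le x x := A.add_idem x

theorem le_trans' {x y z : S} (h1 : A.le x y) (h2 : A.le y z) : A.le x z := by
  unfold le at *
  rw [← h2, ← A.add_assoc, h1]

theorem le_antisymm' {x y : S} (h1 : A.le x y) (h2 : A.le y x) : x = y := by
  unfold le at *
  rw [← h1, A.add_comm x y]
  exact h2.symm

theorem le_add_left' (x y : S) : A.le x (A.add x y) := by
  unfold le
  rw [← A.add_assoc, A.add_idem]

theorem le_add_right' (x y : S) : A.le y (A.add x y) := by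
  unfold le
  rw [A.add_comm x y, ← A.add_assoc, A.add_idem]

theorem add_le' {x y z : S} (h1 : A.le x z) (h2 : A.le y z) : A.le (A.add x y) z := by
  unfold le at *
  rw [A.add_assoc, h2, h1]

theorem exists_isInf' (hA : A.BComplete) {X : Set S} (hX : X.Nonempty) :
    ∃ s, A.IsInf X s := by
  obtain ⟨x0, hx0⟩ := hX
  obtain ⟨s, hs⟩ := hA {b | A.LB X b} ⟨x0, fun b hb => hb x0 hx0⟩
  exact ⟨s, fun x hx => hs.2 x fun b hb => hb x hx, fun b hb => hs.1 b hb⟩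

end IdemSemigroup

namespace IdemSemifield
variable {K : Type*} (F : IdemSemifield K)

theorem le_mul_left' (c : K) {a b : K} (h : F.toIdemSemigroup.le a b) :
    F.toIdemSemigroup.le (F.mul c a) (F.mul c b) := by
  have h' : F.toIdemSemigroup.add a b = b := h
  show F.toIdemSemigroup.add (F.mul c a) (F.mul c b) = F.mul c b
  rw [← F.left_distrib, h']

end IdemSemifield

namespace IdemBSpace
variable {K V : Type*} {F : IdemSemifield K} (B : IdemBSpace F V)

theorem smul_zero' (a : K) : B.smul a B.zero = B.zero := by
  conv_lhs => rw [← B.zero_smul B.zero]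
  rw [B.smul_smul, F.mul_zero, B.zero_smul]

theorem eq_zero_of_le_zero {y : V} (h : B.toIdemSemigroup.le y B.zero) : y = B.zero := by
  have h' : B.toIdemSemigroup.add y B.zero = B.zero := h
  have h2 : B.toIdemSemigroup.add B.zero y = y := B.zero_add y
  rw [← h', B.toIdemSemigroup.add_comm y B.zero]
  exact h2.symm

theorem smul_le' (a : K) {x y : V} (h : B.toIdemSemigroup.le x y) :
    B.toIdemSemigroup.le (B.smul a x) (B.smul a y) := by
  have h' : B.toIdemSemigroup.add x y = y := h
  show B.toIdemSemigroup.add (B.smul a x) (B.smul a y) = B.smul a y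
  rw [← B.smul_add, h']

/-- Key lemma: `y ≼ x*(y) ⊙ x`, i.e. the infimum defining the star functional is
attained. -/
theorem star_ge (hFc : F.BComplete) {x : V} {f : V → K}
    (hstar : ∀ y, F.toIdemSemigroup.IsInf {k | B.toIdemSemigroup.le y (B.smul k x)} (f y))
    {y : V} {k0 : K} (hk0 : B.toIdemSemigroup.le y (B.smul k0 x)) :
    B.toIdemSemigroup.le y (B.smul (f y) x) := by
  set Q : Set K := {k | B.toIdemSemigroup.le y (B.smul k x)} with hQ
  have meet : ∀ k ∈ Q, ∃ m, m ∈ Q ∧ F.toIdemSemigroup.le m k ∧ F.toIdemSemigroup.le m k0 := by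
    intro k hk
    obtain ⟨m, hm⟩ := F.toIdemSemigroup.exists_isInf' hFc (X := {k, k0}) ⟨k, Or.inl rfl⟩
    have hub : ∃ b, F.toIdemSemigroup.UB {k, k0} b := by
      refine ⟨F.add k k0, ?_⟩
      intro q hq
      rcases hq with h | h
      · rw [h]; exact F.toIdemSemigroup.le_add_left' k k0
      · rw [show q = k0 from h]; exact F.toIdemSemigroup.le_add_right' k k0
    have h2 := B.smul_inf {k, k0} x m ⟨k, Or.inl rfl⟩ hub hm
    have hmem : m ∈ Q := by
      refine h2.2 y ?_
      rintro z ⟨q, hq, rfl⟩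
      rcases hq with h | h
      · rw [h]; exact hk
      · rw [show q = k0 from h]; exact hk0
    exact ⟨m, hmem, hm.1 k (Or.inl rfl), hm.1 k0 (Or.inr rfl)⟩
  set Q0 : Set K := {k | k ∈ Q ∧ F.toIdemSemigroup.le k k0} with hQ0
  have hinf0 : F.toIdemSemigroup.IsInf Q0 (f y) := by
    constructor
    · intro k hk
      exact (hstar y).1 k hk.1
    · intro b hb
      refine (hstar y).2 b ?_
      intro k hk
      obtain ⟨m, hmQ, hmk, hmk0⟩ := meet k hk
      exact F.toIdemSemigroup.le_trans' (hb m ⟨hmQ, hmk0⟩) hmk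
  have h3 := B.smul_inf Q0 x (f y) ⟨k0, hk0, F.toIdemSemigroup.le_refl' k0⟩
      ⟨k0, fun q hq => hq.2⟩ hinf0
  refine h3.2 y ?_
  rintro z ⟨q, hq, rfl⟩
  exact hq.1

/-- Projection of `x` onto a wo-closed subspace: the sup of all elements of `W`
below `x` exists and lies in `W` (via a maximal-chain argument). -/
theorem exists_proj {W : Set V} (hsub : B.Subspace W) (hwo : B.WOClosed W) (x : V) :
    ∃ s ∈ W, B.toIdemSemigroup.IsSup {y | y ∈ W ∧ B.toIdemSemigroup.le y x} s := by
  classical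
  set D : Set V := {y | y ∈ W ∧ B.toIdemSemigroup.le y x} with hD
  set S : Set (Set V) := {C | C ⊆ D ∧ B.toIdemSemigroup.Chain C} with hS
  have hzorn : ∀ c ⊆ S, IsChain (· ⊆ ·) c → ∃ ub ∈ S, ∀ s ∈ c, s ⊆ ub := by
    intro c hc hcchain
    refine ⟨⋃₀ c, ⟨?_, ?_⟩, fun s hs => Set.subset_sUnion_of_mem hs⟩
    · intro z hz
      obtain ⟨t, ht, hzt⟩ := hz
      exact (hc ht).1 hzt
    · rintro u ⟨t1, ht1, hu⟩ v ⟨t2, ht2, hv⟩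
      rcases IsChain.total hcchain ht1 ht2 with h | h
      · exact (hc ht2).2 u (h hu) v hv
      · exact (hc ht1).2 u hu v (h hv)
  obtain ⟨C, hC⟩ := zorn_subset S hzorn
  have hCD : C ⊆ D := hC.1.1
  have hCchain : B.toIdemSemigroup.Chain C := hC.1.2
  obtain ⟨s, hs⟩ := B.bcomplete C ⟨x, fun y hy => (hCD hy).2⟩
  have hsW : s ∈ W := (hwo C (fun y hy => (hCD hy).1) hCchain).1 s hs
  have hsx : B.toIdemSemigroup.le s x := hs.2 x fun y hy => (hCD hy).2
  have hubD : B.toIdemSemigroup.UB D s := by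
    intro d hd
    have hsd : B.add s d ∈ D :=
      ⟨hsub.1 s hsW d hd.1, B.toIdemSemigroup.add_le' hsx hd.2⟩
    have hins : insert (B.add s d) C ∈ S := by
      constructor
      · intro z hz
        rcases hz with rfl | hz
        · exact hsd
        · exact hCD hz
      · rintro u (rfl | hu) v (rfl | hv)
        · exact Or.inl (B.toIdemSemigroup.le_refl' _)
        · exact Or.inr (B.toIdemSemigroup.le_trans' (hs.1 v hv)
            (B.toIdemSemigroup.le_add_left' s d))
        · exact Or.inl (B.toIdemSemigroup.le_trans' (hs.1 u hu)
            (B.toIdemSemigroup.le_add_left' s d))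
        · exact hCchain u hu v hv
    have hmem : B.add s d ∈ C := hC.2 hins (Set.subset_insert _ _) (Set.mem_insert _ _)
    exact B.toIdemSemigroup.le_trans' (B.toIdemSemigroup.le_add_right' s d) (hs.1 _ hmem)
  exact ⟨s, hsW, hubD, fun b hb => hs.2 b fun y hy => hb y (hCD hy)⟩

end IdemBSpace

end AuxLemmas

/-- Bounded upper semicontinuous maps X → K. -/
def USCset {K : Type*} (F : IdemSemifield K) (X : Type*) [TopologicalSpace X] :
    Set (X → K) :=
  {f | (∃ b, ∀ t, F.toIdemSemigroup.le (f t) b) ∧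
    ∀ b, IsClosed {t | F.toIdemSemigroup.le b (f t)}}

/-- In an Archimedean idempotent b-space, a nonempty family of nonzero wo-closed
subspaces linearly ordered by inclusion has nonzero intersection. -/
theorem stmt10 {K V : Type*} (F : IdemSemifield K) (hF : F.BComplete)
    (B : IdemBSpace F V) (hA : B.ArchSpace)
    (𝒮 : Set (Set V)) (hne : 𝒮.Nonempty)
    (hmem : ∀ W ∈ 𝒮, B.Subspace W ∧ B.WOClosed W ∧ ∃ v ∈ W, v ≠ B.zero)
    (hchain : ∀ W ∈ 𝒮, ∀ U ∈ 𝒮, W ⊆ U ∨ U ⊆ W) :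
    ∃ v, v ≠ B.zero ∧ ∀ W ∈ 𝒮, v ∈ W := by
  classical
  obtain ⟨x, harch, f, hstar, hcont⟩ := hA
  have hproj : ∀ W : Set V, ∃ s, W ∈ 𝒮 → s ∈ W ∧
      B.toIdemSemigroup.IsSup {y | y ∈ W ∧ B.toIdemSemigroup.le y x} s := by
    intro W
    by_cases hW : W ∈ 𝒮
    · obtain ⟨s, h1, h2⟩ := B.exists_proj (hmem W hW).1 (hmem W hW).2.1 x
      exact ⟨s, fun _ => ⟨h1, h2⟩⟩
    · exact ⟨B.zero, fun h => absurd h hW⟩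
  choose v hv using hproj
  have hv1 : ∀ W ∈ 𝒮, v W ∈ W := fun W hW => (hv W hW).1
  have hv2 : ∀ W ∈ 𝒮,
      B.toIdemSemigroup.IsSup {y | y ∈ W ∧ B.toIdemSemigroup.le y x} (v W) :=
    fun W hW => (hv W hW).2
  have hvx : ∀ W ∈ 𝒮, B.toIdemSemigroup.le (v W) x := fun W hW =>
    (hv2 W hW).2 x fun y hy => hy.2
  -- `f (v W) ≽ 1` for each `W ∈ 𝒮`
  have hone_le : ∀ W ∈ 𝒮, F.toIdemSemigroup.le F.one (f (v W)) := by
    intro W hW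
    obtain ⟨w0, hw0W, hw0ne⟩ := (hmem W hW).2.2
    obtain ⟨a, ha⟩ := harch w0
    have hane : a ≠ F.zero := by
      intro h
      subst h
      rw [B.zero_smul] at ha
      exact hw0ne (B.eq_zero_of_le_zero ha)
    obtain ⟨a', ha'1, ha'2⟩ := F.inv_exists a hane
    set y2 : V := B.smul a' w0 with hy2
    have hy2W : y2 ∈ W := (hmem W hW).1.2 a' w0 hw0W
    have hy2x : B.toIdemSemigroup.le y2 x := by
      have h := B.smul_le' a' ha
      rw [B.smul_smul a' a x, ha'2, B.one_smul] at h
      exact h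
    have hy2ne : y2 ≠ B.zero := by
      intro h
      apply hw0ne
      have h2 : B.smul a y2 = w0 := by rw [hy2, B.smul_smul a a' w0, ha'1, B.one_smul]
      rw [← h2, h, B.smul_zero']
    set lam := f y2 with hlam
    have hy2lam : B.toIdemSemigroup.le y2 (B.smul lam x) := by
      refine B.star_ge hF hstar (k0 := F.one) ?_
      rw [B.one_smul]
      exact hy2x
    have hlamne : lam ≠ F.zero := by
      intro h
      apply hy2ne
      apply B.eq_zero_of_le_zero
      rwa [h, B.zero_smul] at hy2lam
    obtain ⟨lam', hl1, hl2⟩ := F.inv_exists lam hlamne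
    set y1 : V := B.smul lam' y2 with hy1
    have hy1W : y1 ∈ W := (hmem W hW).1.2 lam' y2 hy2W
    have hy1x : B.toIdemSemigroup.le y1 x := by
      have h := B.smul_le' lam' hy2lam
      rw [B.smul_smul lam' lam x, hl2, B.one_smul] at h
      exact h
    have hy1vW : B.toIdemSemigroup.le y1 (v W) := (hv2 W hW).1 y1 ⟨hy1W, hy1x⟩
    have hlb : F.toIdemSemigroup.LB {k | B.toIdemSemigroup.le y1 (B.smul k x)} F.one := by
      intro k hk
      have h1 : B.toIdemSemigroup.le y2 (B.smul (F.mul lam k) x) := by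
        have h := B.smul_le' lam hk
        rw [B.smul_smul lam k x] at h
        have h2 : B.smul lam y1 = y2 := by
          rw [hy1, B.smul_smul lam lam' y2, hl1, B.one_smul]
        rwa [h2] at h
      have h3 : F.toIdemSemigroup.le lam (F.mul lam k) := (hstar y2).1 _ h1
      have h4 := F.le_mul_left' lam' h3
      rwa [← F.mul_assoc, hl2, F.one_mul] at h4
    have h5 : F.toIdemSemigroup.le F.one (f y1) := (hstar y1).2 F.one hlb
    have h6 : F.toIdemSemigroup.le (f y1) (f (v W)) := by
      refine (hstar (v W)).2 (f y1) ?_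
      intro k hk
      exact (hstar y1).1 k (B.toIdemSemigroup.le_trans' hy1vW hk)
    exact F.toIdemSemigroup.le_trans' h5 h6
  -- monotonicity of the projection in `W`
  have hmono : ∀ W ∈ 𝒮, ∀ U ∈ 𝒮, W ⊆ U → B.toIdemSemigroup.le (v W) (v U) := by
    intro W hW U hU hWU
    exact (hv2 W hW).2 (v U) fun y hy => (hv2 U hU).1 y ⟨hWU hy.1, hy.2⟩
  set T : Set V := v '' 𝒮 with hT
  have hTchain : B.toIdemSemigroup.Chain T := by
    rintro t1 ⟨U1, hU1, rfl⟩ t2 ⟨U2, hU2, rfl⟩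
    rcases hchain U1 hU1 U2 hU2 with h | h
    · exact Or.inl (hmono U1 hU1 U2 hU2 h)
    · exact Or.inr (hmono U2 hU2 U1 hU1 h)
  obtain ⟨W0, hW0⟩ := hne
  obtain ⟨z, hz⟩ := B.toIdemSemigroup.exists_isInf' B.bcomplete
    (X := T) ⟨v W0, W0, hW0, rfl⟩
  -- `z` lies in every `W ∈ 𝒮`
  have hzW : ∀ W ∈ 𝒮, z ∈ W := by
    intro W hW
    set SW : Set V := v '' {U | U ∈ 𝒮 ∧ U ⊆ W} with hSW
    have hSWsub : SW ⊆ W := by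
      rintro t ⟨U, ⟨hU, hUW⟩, rfl⟩
      exact hUW (hv1 U hU)
    have hSWchain : B.toIdemSemigroup.Chain SW := by
      rintro t1 ⟨U1, ⟨hU1, _⟩, rfl⟩ t2 ⟨U2, ⟨hU2, _⟩, rfl⟩
      rcases hchain U1 hU1 U2 hU2 with h | h
      · exact Or.inl (hmono U1 hU1 U2 hU2 h)
      · exact Or.inr (hmono U2 hU2 U1 hU1 h)
    have hSWinf : B.toIdemSemigroup.IsInf SW z := by
      constructor
      · rintro t ⟨U, ⟨hU, _⟩, rfl⟩
        exact hz.1 (v U) ⟨U, hU, rfl⟩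
      · intro b hb
        refine hz.2 b ?_
        rintro t ⟨U, hU, rfl⟩
        rcases hchain U hU W hW with h | h
        · exact hb (v U) ⟨U, ⟨hU, h⟩, rfl⟩
        · exact B.toIdemSemigroup.le_trans'
            (hb (v W) ⟨W, ⟨hW, Set.Subset.rfl⟩, rfl⟩) (hmono W hW U hU h)
    exact ((hmem W hW).2.1 SW hSWsub hSWchain).2 z
      ⟨v W, W, ⟨hW, Set.Subset.rfl⟩, rfl⟩ hSWinf
  -- `f z ≽ 1` by wo-continuity
  have hfz := hcont.2 T hTchain ⟨v W0, W0, hW0, rfl⟩ z hz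
  have hone_fz : F.toIdemSemigroup.le F.one (f z) := by
    refine hfz.2 F.one ?_
    rintro q ⟨t, ⟨U, hU, rfl⟩, rfl⟩
    exact hone_le U hU
  refine ⟨z, ?_, hzW⟩
  intro hzzero
  have hfz0 : F.toIdemSemigroup.le (f B.zero) F.zero := by
    refine (hstar B.zero).1 F.zero ?_
    show B.toIdemSemigroup.le B.zero (B.smul F.zero x)
    rw [B.zero_smul]
    exact B.toIdemSemigroup.le_refl' _
  have h10 : F.toIdemSemigroup.le F.one F.zero := by
    rw [hzzero] at hone_fz
    exact F.toIdemSemigroup.le_trans' hone_fz hfz0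
  have h01 : F.toIdemSemigroup.le F.zero F.one := F.zero_add F.one
  have hone_eq : F.one = F.zero := F.toIdemSemigroup.le_antisymm' h10 h01
  obtain ⟨w0, hw0W, hw0ne⟩ := (hmem W0 hW0).2.2
  apply hw0ne
  calc w0 = B.smul F.one w0 := (B.one_smul w0).symm
    _ = B.smul F.zero w0 := by rw [hone_eq]
    _ = B.zero := B.zero_smul w0
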